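/- Let β > 0. If V is a bounded upper semicontinuous viscosity subsolution of the discounted HJBQVI, then for every x ∈ ℝ, min{ V(T,x) − g_β(x), V(T,x) − M_β V(T,x) } ≤ 0. Symmetrically, if V is a bounded lower semicontinuous viscosity supersolution of the discounted HJBQVI, then for every x ∈ ℝ, min{ V(T,x) − g_β(x), V(T,x) − M_β V(T,x) } ≥ 0. (The discounted HJBQVI exhibits no boundary layer at the terminal time T.) -/

import Mathlib

open Filter Topology Set TopologicalSpace

noncomputable section

/-- The closed parabolic domain `Ω̄ = [0,T] × ℝ`. -/
def Omb (T : ℝ) : Set (ℝ × ℝ) := Set.Icc 0 T ×ˢ (Set.univ : Set ℝ)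

/-- The (undiscounted) intervention operator applied to a payoff. -/
def Mop {Y : Type*} [MetricSpace Y] (Z : ℝ × ℝ → NonemptyCompacts Y)
    (Γ K : ℝ → ℝ → Y → ℝ) (V : ℝ × ℝ → ℝ) (p : ℝ × ℝ) : ℝ :=
  sSup ((fun z => V (p.1, Γ p.1 p.2 z) + K p.1 p.2 z) '' (Z p : Set Y))

/-- The discounted intervention operator
`M_β V(t,x) = sup_{z ∈ Z(t,x)} { V(t, Γ(t,x,z)) + e^{βt} K(t,x,z) }`. -/
def MopB {Y : Type*} [MetricSpace Y] (β : ℝ) (Z : ℝ × ℝ → NonemptyCompacts Y)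
    (Γ K : ℝ → ℝ → Y → ℝ) (V : ℝ × ℝ → ℝ) (p : ℝ × ℝ) : ℝ :=
  Mop Z Γ (fun t x z => Real.exp (β * t) * K t x z) V p

/-- The discounted HJBQVI operator `F_β((t,x), r, (q,p), A, ℓ)`. -/
def Fb (T β : ℝ) {W : Type*} (a b : ℝ → W → ℝ) (f : ℝ → ℝ → W → ℝ) (g : ℝ → ℝ) :
    (ℝ × ℝ) × ℝ × (ℝ × ℝ) × ℝ × ℝ → ℝ
  | ((t, x), r, (q, p), A, l) =>
    if t < T then
      min (-q + β * r -
          ⨆ w, (((1 : ℝ) / 2) * b x w ^ 2 * A + a x w * p + Real.exp (β * t) * f t x w))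
        (r - l)
    else min (r - Real.exp (β * T) * g x) (r - l)

/-- Lower semicontinuous envelope relative to the domain. -/
def lowEnv (T : ℝ) (F : (ℝ × ℝ) × ℝ × (ℝ × ℝ) × ℝ × ℝ → ℝ)
    (ξ : (ℝ × ℝ) × ℝ × (ℝ × ℝ) × ℝ × ℝ) : ℝ :=
  liminf F (𝓝[{η : (ℝ × ℝ) × ℝ × (ℝ × ℝ) × ℝ × ℝ | η.1 ∈ Omb T}] ξ)

/-- Upper semicontinuous envelope relative to the domain. -/
def upEnv (T : ℝ) (F : (ℝ × ℝ) × ℝ × (ℝ × ℝ) × ℝ × ℝ → ℝ)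
    (ξ : (ℝ × ℝ) × ℝ × (ℝ × ℝ) × ℝ × ℝ) : ℝ :=
  limsup F (𝓝[{η : (ℝ × ℝ) × ℝ × (ℝ × ℝ) × ℝ × ℝ | η.1 ∈ Omb T}] ξ)

/-- Test functions: once continuously differentiable in `t`, twice in `x`. -/
def C12 (φ φt φx φxx : ℝ × ℝ → ℝ) : Prop :=
  Continuous φ ∧ Continuous φt ∧ Continuous φx ∧ Continuous φxx ∧
    (∀ p : ℝ × ℝ, HasDerivAt (fun t => φ (t, p.2)) (φt p) p.1) ∧
    (∀ p : ℝ × ℝ, HasDerivAt (fun x => φ (p.1, x)) (φx p) p.2) ∧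
    (∀ p : ℝ × ℝ, HasDerivAt (fun x => φx (p.1, x)) (φxx p) p.2)

/-- Viscosity subsolution of the discounted HJBQVI. -/
def IsSubsolB (T β : ℝ) {W Y : Type*} [MetricSpace Y]
    (a b : ℝ → W → ℝ) (f : ℝ → ℝ → W → ℝ) (g : ℝ → ℝ)
    (Z : ℝ × ℝ → NonemptyCompacts Y) (Γ K : ℝ → ℝ → Y → ℝ)
    (V : ℝ × ℝ → ℝ) : Prop :=
  ∀ φ φt φx φxx : ℝ × ℝ → ℝ, C12 φ φt φx φxx → ∀ p ∈ Omb T,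
    IsLocalMaxOn (fun q => V q - φ q) (Omb T) p →
    lowEnv T (Fb T β a b f g) (p, V p, (φt p, φx p), φxx p, MopB β Z Γ K V p) ≤ 0

/-- Viscosity supersolution of the discounted HJBQVI. -/
def IsSupersolB (T β : ℝ) {W Y : Type*} [MetricSpace Y]
    (a b : ℝ → W → ℝ) (f : ℝ → ℝ → W → ℝ) (g : ℝ → ℝ)
    (Z : ℝ × ℝ → NonemptyCompacts Y) (Γ K : ℝ → ℝ → Y → ℝ)
    (V : ℝ × ℝ → ℝ) : Prop :=
  ∀ φ φt φx φxx : ℝ × ℝ → ℝ, C12 φ φt φx φxx → ∀ p ∈ Omb T,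
    IsLocalMinOn (fun q => V q - φ q) (Omb T) p →
    0 ≤ upEnv T (Fb T β a b f g) (p, V p, (φt p, φx p), φxx p, MopB β Z Γ K V p)

lemma mem_Omb {T : ℝ} {p : ℝ × ℝ} : p ∈ Omb T ↔ p.1 ∈ Set.Icc 0 T := by
  simp [Omb]

/-- An upper semicontinuous real function on a nonempty compact set attains its maximum. -/
theorem usc_exists_max {X : Type*} [TopologicalSpace X] {s : Set X} (hs : IsCompact s)
    (hne : s.Nonempty) {f : X → ℝ} (hf : UpperSemicontinuousOn f s) :
    ∃ x ∈ s, ∀ y ∈ s, f y ≤ f x := by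
  by_contra h
  push_neg at h
  choose! y hy hlt using h
  have hU : ∀ x ∈ s, ∃ U : Set X, IsOpen U ∧ x ∈ U ∧ ∀ x' ∈ U ∩ s, f x' < f (y x) := by
    intro x hx
    have hev : ∀ᶠ x' in 𝓝[s] x, f x' < f (y x) := hf x hx _ (hlt x hx)
    rcases mem_nhdsWithin.1 hev with ⟨U, hUo, hxU, hsub⟩
    exact ⟨U, hUo, hxU, fun x' hx' => hsub hx'⟩
  choose! U hUo hxU hUlt using hU
  obtain ⟨t, hts, hcov⟩ := hs.elim_nhds_subcover U (fun x hx => (hUo x hx).mem_nhds (hxU x hx))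
  obtain ⟨x₀, hx₀⟩ := hne
  have htne : t.Nonempty := by
    rcases mem_iUnion₂.1 (hcov hx₀) with ⟨j, hj, _⟩
    exact ⟨j, hj⟩
  obtain ⟨xm, hxmt, hmax⟩ := t.exists_max_image (fun x => f (y x)) htne
  have hyms : y xm ∈ s := hy xm (hts xm hxmt)
  rcases mem_iUnion₂.1 (hcov hyms) with ⟨j, hjt, hjU⟩
  have h1 : f (y xm) < f (y j) := hUlt j (hts j hjt) (y xm) ⟨hjU, hyms⟩
  have h2 : f (y j) ≤ f (y xm) := hmax j hjt
  linarith

/-- A lower semicontinuous real function on a nonempty compact set attains its minimum. -/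
theorem lsc_exists_min {X : Type*} [TopologicalSpace X] {s : Set X} (hs : IsCompact s)
    (hne : s.Nonempty) {f : X → ℝ} (hf : LowerSemicontinuousOn f s) :
    ∃ x ∈ s, ∀ y ∈ s, f x ≤ f y := by
  by_contra h
  push_neg at h
  choose! y hy hlt using h
  have hU : ∀ x ∈ s, ∃ U : Set X, IsOpen U ∧ x ∈ U ∧ ∀ x' ∈ U ∩ s, f (y x) < f x' := by
    intro x hx
    have hev : ∀ᶠ x' in 𝓝[s] x, f (y x) < f x' := hf x hx _ (hlt x hx)
    rcases mem_nhdsWithin.1 hev with ⟨U, hUo, hxU, hsub⟩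
    exact ⟨U, hUo, hxU, fun x' hx' => hsub hx'⟩
  choose! U hUo hxU hUlt using hU
  obtain ⟨t, hts, hcov⟩ := hs.elim_nhds_subcover U (fun x hx => (hUo x hx).mem_nhds (hxU x hx))
  obtain ⟨x₀, hx₀⟩ := hne
  have htne : t.Nonempty := by
    rcases mem_iUnion₂.1 (hcov hx₀) with ⟨j, hj, _⟩
    exact ⟨j, hj⟩
  obtain ⟨xm, hxmt, hmin⟩ := t.exists_min_image (fun x => f (y x)) htne
  have hyms : y xm ∈ s := hy xm (hts xm hxmt)
  rcases mem_iUnion₂.1 (hcov hyms) with ⟨j, hjt, hjU⟩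
  have h1 : f (y j) < f (y xm) := hUlt j (hts j hjt) (y xm) ⟨hjU, hyms⟩
  have h2 : f (y xm) ≤ f (y j) := hmin j hjt
  linarith


section MopBounds

variable {Y : Type*} [MetricSpace Y] {T β : ℝ}
  {Z : ℝ × ℝ → NonemptyCompacts Y} {Γ K : ℝ → ℝ → Y → ℝ} {V : ℝ × ℝ → ℝ} {C : ℝ}

lemma payoff_le (hKle : ∀ t ∈ Set.Icc (0:ℝ) T, ∀ x z, K t x z ≤ 0)
    (hV : ∀ q ∈ Omb T, |V q| ≤ C) {p : ℝ × ℝ} (hp : p ∈ Omb T) (z : Y) :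
    V (p.1, Γ p.1 p.2 z) + Real.exp (β * p.1) * K p.1 p.2 z ≤ C := by
  have h1 : (p.1, Γ p.1 p.2 z) ∈ Omb T := mem_Omb.2 (mem_Omb.1 hp)
  have h2 : V (p.1, Γ p.1 p.2 z) ≤ C := (abs_le.1 (hV _ h1)).2
  have h3 : Real.exp (β * p.1) * K p.1 p.2 z ≤ 0 :=
    mul_nonpos_iff.2 (Or.inl ⟨(Real.exp_pos _).le, hKle p.1 (mem_Omb.1 hp) p.2 z⟩)
  linarith

lemma mopB_bddAbove (hKle : ∀ t ∈ Set.Icc (0:ℝ) T, ∀ x z, K t x z ≤ 0)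
    (hV : ∀ q ∈ Omb T, |V q| ≤ C) {p : ℝ × ℝ} (hp : p ∈ Omb T) :
    BddAbove ((fun z => V (p.1, Γ p.1 p.2 z) + Real.exp (β * p.1) * K p.1 p.2 z) ''
      (Z p : Set Y)) := by
  refine ⟨C, ?_⟩
  rintro _ ⟨z, _, rfl⟩
  exact payoff_le hKle hV hp z

lemma le_mopB (hKle : ∀ t ∈ Set.Icc (0:ℝ) T, ∀ x z, K t x z ≤ 0)
    (hV : ∀ q ∈ Omb T, |V q| ≤ C) {p : ℝ × ℝ} (hp : p ∈ Omb T) {z : Y}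
    (hz : z ∈ (Z p : Set Y)) :
    V (p.1, Γ p.1 p.2 z) + Real.exp (β * p.1) * K p.1 p.2 z ≤ MopB β Z Γ K V p :=
  le_csSup (mopB_bddAbove hKle hV hp) (mem_image_of_mem _ hz)

lemma mopB_le (hKle : ∀ t ∈ Set.Icc (0:ℝ) T, ∀ x z, K t x z ≤ 0)
    (hV : ∀ q ∈ Omb T, |V q| ≤ C) {p : ℝ × ℝ} (hp : p ∈ Omb T) :
    MopB β Z Γ K V p ≤ C := by
  refine csSup_le ((Z p).nonempty.image _) ?_
  rintro _ ⟨z, _, rfl⟩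
  exact payoff_le hKle hV hp z

end MopBounds

section MopSemicont

variable {Y : Type*} [MetricSpace Y] {T β : ℝ}
  {Z : ℝ × ℝ → NonemptyCompacts Y} {Γ K : ℝ → ℝ → Y → ℝ} {V : ℝ × ℝ → ℝ} {C : ℝ}

/-- The payoff map as a function of the joint variable. -/
private def pay (β : ℝ) (Γ K : ℝ → ℝ → Y → ℝ) (V : ℝ × ℝ → ℝ) (q : (ℝ × ℝ) × Y) : ℝ :=
  V (q.1.1, Γ q.1.1 q.1.2 q.2) + Real.exp (β * q.1.1) * K q.1.1 q.1.2 q.2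

private lemma mopB_eq_sSup_pay (p : ℝ × ℝ) :
    MopB β Z Γ K V p = sSup ((fun z => pay β Γ K V (p, z)) '' (Z p : Set Y)) := rfl

private lemma gamma_tendsto
    (hΓ : ContinuousOn (fun p : ℝ × ℝ × Y => Γ p.1 p.2.1 p.2.2)
      {p : ℝ × ℝ × Y | p.1 ∈ Set.Icc 0 T})
    {p₀ : ℝ × ℝ} (hp₀ : p₀ ∈ Omb T) (z : Y) :
    Tendsto (fun q : (ℝ × ℝ) × Y => (q.1.1, Γ q.1.1 q.1.2 q.2))
      (𝓝[{q : (ℝ × ℝ) × Y | q.1 ∈ Omb T}] (p₀, z))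
      (𝓝[Omb T] (p₀.1, Γ p₀.1 p₀.2 z)) := by
  set D : Set ((ℝ × ℝ) × Y) := {q | q.1 ∈ Omb T}
  have hre : Continuous (fun q : (ℝ × ℝ) × Y => (q.1.1, q.1.2, q.2)) := by fun_prop
  have hmem : ((p₀, z) : (ℝ × ℝ) × Y) ∈ D := hp₀
  have hmaps : MapsTo (fun q : (ℝ × ℝ) × Y => (q.1.1, q.1.2, q.2)) D
      {p : ℝ × ℝ × Y | p.1 ∈ Set.Icc 0 T} := fun q hq => mem_Omb.1 hq
  have h2 : ContinuousWithinAt (fun q : (ℝ × ℝ) × Y => Γ q.1.1 q.1.2 q.2) D (p₀, z) := by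
    exact ContinuousWithinAt.comp (f := fun q : (ℝ × ℝ) × Y => (q.1.1, q.1.2, q.2))
      (g := fun p : ℝ × ℝ × Y => Γ p.1 p.2.1 p.2.2)
      (hΓ (p₀.1, p₀.2, z) (mem_Omb.1 hp₀)) hre.continuousWithinAt hmaps
  have h1 : ContinuousWithinAt (fun q : (ℝ × ℝ) × Y => q.1.1) D (p₀, z) :=
    (continuous_fst.fst).continuousWithinAt
  have hG : ContinuousWithinAt (fun q : (ℝ × ℝ) × Y => (q.1.1, Γ q.1.1 q.1.2 q.2)) D (p₀, z) :=
    h1.prodMk h2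
  exact hG.tendsto_nhdsWithin (fun q hq => mem_Omb.2 (mem_Omb.1 hq))

private lemma kpart_tendsto
    (hK : ContinuousOn (fun p : ℝ × ℝ × Y => K p.1 p.2.1 p.2.2)
      {p : ℝ × ℝ × Y | p.1 ∈ Set.Icc 0 T})
    {p₀ : ℝ × ℝ} (hp₀ : p₀ ∈ Omb T) (z : Y) :
    Tendsto (fun q : (ℝ × ℝ) × Y => Real.exp (β * q.1.1) * K q.1.1 q.1.2 q.2)
      (𝓝[{q : (ℝ × ℝ) × Y | q.1 ∈ Omb T}] (p₀, z))
      (𝓝 (Real.exp (β * p₀.1) * K p₀.1 p₀.2 z)) := by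
  set D : Set ((ℝ × ℝ) × Y) := {q | q.1 ∈ Omb T}
  have hre : Continuous (fun q : (ℝ × ℝ) × Y => (q.1.1, q.1.2, q.2)) := by fun_prop
  have hmaps : MapsTo (fun q : (ℝ × ℝ) × Y => (q.1.1, q.1.2, q.2)) D
      {p : ℝ × ℝ × Y | p.1 ∈ Set.Icc 0 T} := fun q hq => mem_Omb.1 hq
  have h2 : ContinuousWithinAt (fun q : (ℝ × ℝ) × Y => K q.1.1 q.1.2 q.2) D (p₀, z) := by
    exact ContinuousWithinAt.comp (f := fun q : (ℝ × ℝ) × Y => (q.1.1, q.1.2, q.2))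
      (g := fun p : ℝ × ℝ × Y => K p.1 p.2.1 p.2.2)
      (hK (p₀.1, p₀.2, z) (mem_Omb.1 hp₀)) hre.continuousWithinAt hmaps
  have h1 : ContinuousWithinAt (fun q : (ℝ × ℝ) × Y => Real.exp (β * q.1.1)) D (p₀, z) :=
    (Continuous.continuousWithinAt (by fun_prop))
  exact h1.mul h2

/-- Upper semicontinuity (at a point, `ε`-`δ` form) of the discounted intervention operator. -/
theorem mopB_usc_at
    (hZ : ContinuousOn Z (Omb T))
    (hΓ : ContinuousOn (fun p : ℝ × ℝ × Y => Γ p.1 p.2.1 p.2.2)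
      {p : ℝ × ℝ × Y | p.1 ∈ Set.Icc 0 T})
    (hK : ContinuousOn (fun p : ℝ × ℝ × Y => K p.1 p.2.1 p.2.2)
      {p : ℝ × ℝ × Y | p.1 ∈ Set.Icc 0 T})
    (hKle : ∀ t ∈ Set.Icc (0:ℝ) T, ∀ x z, K t x z ≤ 0)
    (hV : ∀ q ∈ Omb T, |V q| ≤ C)
    (hVu : UpperSemicontinuousOn V (Omb T))
    {p₀ : ℝ × ℝ} (hp₀ : p₀ ∈ Omb T) {ε : ℝ} (hε : 0 < ε) :
    ∃ δ > 0, ∀ p' ∈ Omb T, dist p' p₀ < δ →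
      MopB β Z Γ K V p' ≤ MopB β Z Γ K V p₀ + ε := by
  classical
  set D : Set ((ℝ × ℝ) × Y) := {q : (ℝ × ℝ) × Y | q.1 ∈ Omb T} with hD
  set M₀ := MopB β Z Γ K V p₀ with hM₀
  -- Step A: local bound around each (p₀, z)
  have stepA : ∀ z ∈ (Z p₀ : Set Y), ∃ ρ > 0, ∀ q : (ℝ × ℝ) × Y,
      dist q ((p₀, z) : (ℝ × ℝ) × Y) < ρ → q.1 ∈ Omb T →
      pay β Γ K V q < M₀ + ε / 2 := by
    intro z hz
    have hVev : ∀ᶠ y in 𝓝[Omb T] (p₀.1, Γ p₀.1 p₀.2 z),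
        V y < V (p₀.1, Γ p₀.1 p₀.2 z) + ε / 4 :=
      hVu (p₀.1, Γ p₀.1 p₀.2 z) (mem_Omb.2 (mem_Omb.1 hp₀)) _ (by linarith)
    have ev1 := (gamma_tendsto hΓ hp₀ z).eventually hVev
    have ev2 := (kpart_tendsto (β := β) hK hp₀ z).eventually_lt_const
      (show Real.exp (β * p₀.1) * K p₀.1 p₀.2 z < Real.exp (β * p₀.1) * K p₀.1 p₀.2 z + ε / 4
        by linarith)
    have hpm : pay β Γ K V (p₀, z) ≤ M₀ :=
      le_mopB hKle hV hp₀ hz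
    have hev : ∀ᶠ q in 𝓝[D] (p₀, z), pay β Γ K V q < M₀ + ε / 2 := by
      filter_upwards [ev1, ev2] with q h1 h2
      have : pay β Γ K V q < pay β Γ K V (p₀, z) + ε / 2 := by
        simp only [pay] at *
        linarith
      linarith
    rcases Metric.mem_nhdsWithin_iff.1 hev with ⟨ρ, hρ, hsub⟩
    exact ⟨ρ, hρ, fun q hq1 hq2 => hsub ⟨hq1, hq2⟩⟩
  choose! ρ hρpos hball using stepA
  -- finite subcover
  obtain ⟨t, hts, hcov⟩ := (Z p₀).isCompact.elim_nhds_subcover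
    (fun z => Metric.ball z (ρ z / 2))
    (fun z hz => Metric.ball_mem_nhds z (by linarith [hρpos z hz]))
  obtain ⟨z₀, hz₀⟩ := (Z p₀).nonempty
  have htne : t.Nonempty := by
    rcases mem_iUnion₂.1 (hcov hz₀) with ⟨j, hj, _⟩
    exact ⟨j, hj⟩
  set δ₁ := t.inf' htne (fun z => ρ z / 2) with hδ₁
  have hδ₁pos : 0 < δ₁ := by
    rw [hδ₁, Finset.lt_inf'_iff]
    exact fun z hzt => by linarith [hρpos z (hts z hzt)]
  obtain ⟨δ₂, hδ₂pos, hZd⟩ := Metric.continuousWithinAt_iff.1 (hZ p₀ hp₀) δ₁ hδ₁pos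
  refine ⟨min δ₁ δ₂, lt_min hδ₁pos hδ₂pos, fun p' hp' hdist => ?_⟩
  rw [mopB_eq_sSup_pay]
  refine csSup_le ((Z p').nonempty.image _) ?_
  rintro _ ⟨z', hz', rfl⟩
  have hd : Metric.hausdorffDist (Z p' : Set Y) (Z p₀ : Set Y) < δ₁ := by
    have := hZd hp' (lt_of_lt_of_le hdist (min_le_right _ _))
    rwa [Metric.NonemptyCompacts.dist_eq] at this
  have fin : EMetric.hausdorffEdist (Z p' : Set Y) (Z p₀ : Set Y) ≠ ⊤ :=
    Metric.hausdorffEdist_ne_top_of_nonempty_of_bounded (Z p').nonempty (Z p₀).nonempty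
      (Z p').isCompact.isBounded (Z p₀).isCompact.isBounded
  obtain ⟨z'', hz'', hzd⟩ := Metric.exists_dist_lt_of_hausdorffDist_lt hz' hd fin
  rcases mem_iUnion₂.1 (hcov hz'') with ⟨j, hjt, hjb⟩
  have hjs : j ∈ (Z p₀ : Set Y) := hts j hjt
  have hδ₁le : δ₁ ≤ ρ j / 2 := Finset.inf'_le _ hjt
  have hzj : dist z' j < ρ j := by
    have h1 : dist z'' j < ρ j / 2 := Metric.mem_ball.1 hjb
    calc dist z' j ≤ dist z' z'' + dist z'' j := dist_triangle _ _ _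
      _ < δ₁ + ρ j / 2 := by linarith
      _ ≤ ρ j := by linarith
  have hqd : dist ((p', z') : (ℝ × ℝ) × Y) (p₀, j) < ρ j := by
    rw [Prod.dist_eq]
    refine max_lt ?_ hzj
    calc dist p' p₀ < min δ₁ δ₂ := hdist
      _ ≤ δ₁ := min_le_left _ _
      _ ≤ ρ j / 2 := hδ₁le
      _ < ρ j := by linarith [hρpos j hjs]
  have := hball j hjs (p', z') hqd hp'
  have h2 : pay β Γ K V (p', z') ≤ M₀ + ε := by
    simp only [pay] at this ⊢
    linarith
  exact h2

/-- Lower semicontinuity (at a point, `ε`-`δ` form) of the discounted intervention operator. -/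
theorem mopB_lsc_at
    (hZ : ContinuousOn Z (Omb T))
    (hΓ : ContinuousOn (fun p : ℝ × ℝ × Y => Γ p.1 p.2.1 p.2.2)
      {p : ℝ × ℝ × Y | p.1 ∈ Set.Icc 0 T})
    (hK : ContinuousOn (fun p : ℝ × ℝ × Y => K p.1 p.2.1 p.2.2)
      {p : ℝ × ℝ × Y | p.1 ∈ Set.Icc 0 T})
    (hKle : ∀ t ∈ Set.Icc (0:ℝ) T, ∀ x z, K t x z ≤ 0)
    (hV : ∀ q ∈ Omb T, |V q| ≤ C)
    (hVl : LowerSemicontinuousOn V (Omb T))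
    {p₀ : ℝ × ℝ} (hp₀ : p₀ ∈ Omb T) {ε : ℝ} (hε : 0 < ε) :
    ∃ δ > 0, ∀ p' ∈ Omb T, dist p' p₀ < δ →
      MopB β Z Γ K V p₀ - ε ≤ MopB β Z Γ K V p' := by
  classical
  set D : Set ((ℝ × ℝ) × Y) := {q : (ℝ × ℝ) × Y | q.1 ∈ Omb T} with hD
  set M₀ := MopB β Z Γ K V p₀ with hM₀
  have hne : ((fun z => pay β Γ K V (p₀, z)) '' (Z p₀ : Set Y)).Nonempty :=
    (Z p₀).nonempty.image _
  obtain ⟨v, hv, hvlt⟩ := exists_lt_of_lt_csSup hne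
    (show M₀ - ε / 2 < sSup ((fun z => pay β Γ K V (p₀, z)) '' (Z p₀ : Set Y)) by
      rw [← mopB_eq_sSup_pay]; linarith)
  rcases hv with ⟨z₀, hz₀, rfl⟩
  have hVev : ∀ᶠ y in 𝓝[Omb T] (p₀.1, Γ p₀.1 p₀.2 z₀),
      V (p₀.1, Γ p₀.1 p₀.2 z₀) - ε / 4 < V y :=
    hVl (p₀.1, Γ p₀.1 p₀.2 z₀) (mem_Omb.2 (mem_Omb.1 hp₀)) _ (by linarith)
  have ev1 := (gamma_tendsto hΓ hp₀ z₀).eventually hVev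
  have ev2 := (kpart_tendsto (β := β) hK hp₀ z₀).eventually_const_lt
    (show Real.exp (β * p₀.1) * K p₀.1 p₀.2 z₀ - ε / 4 < Real.exp (β * p₀.1) * K p₀.1 p₀.2 z₀
      by linarith)
  have hev : ∀ᶠ q in 𝓝[D] (p₀, z₀), M₀ - ε < pay β Γ K V q := by
    filter_upwards [ev1, ev2] with q h1 h2
    simp only [pay] at *
    linarith
  rcases Metric.mem_nhdsWithin_iff.1 hev with ⟨ρ, hρpos, hsub⟩
  obtain ⟨δ₂, hδ₂pos, hZd⟩ := Metric.continuousWithinAt_iff.1 (hZ p₀ hp₀) ρ hρpos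
  refine ⟨min ρ δ₂, lt_min hρpos hδ₂pos, fun p' hp' hdist => ?_⟩
  have hd : Metric.hausdorffDist (Z p₀ : Set Y) (Z p' : Set Y) < ρ := by
    have := hZd hp' (lt_of_lt_of_le hdist (min_le_right _ _))
    rw [Metric.NonemptyCompacts.dist_eq] at this
    rwa [Metric.hausdorffDist_comm]
  have fin : EMetric.hausdorffEdist (Z p₀ : Set Y) (Z p' : Set Y) ≠ ⊤ :=
    Metric.hausdorffEdist_ne_top_of_nonempty_of_bounded (Z p₀).nonempty (Z p').nonempty
      (Z p₀).isCompact.isBounded (Z p').isCompact.isBounded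
  obtain ⟨z', hz', hzd⟩ := Metric.exists_dist_lt_of_hausdorffDist_lt hz₀ hd fin
  have hqd : ((p', z') : (ℝ × ℝ) × Y) ∈ Metric.ball ((p₀, z₀) : (ℝ × ℝ) × Y) ρ ∩ D := by
    constructor
    · rw [Metric.mem_ball, Prod.dist_eq]
      refine max_lt (lt_of_lt_of_le hdist (min_le_left _ _)) ?_
      rwa [dist_comm]
    · exact hp'
  have h1 : M₀ - ε < pay β Γ K V (p', z') := hsub hqd
  have h2 : pay β Γ K V (p', z') ≤ MopB β Z Γ K V p' := le_mopB hKle hV hp' hz'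
  linarith

end MopSemicont

lemma tuple_dist_lt {ξ η : (ℝ × ℝ) × ℝ × (ℝ × ℝ) × ℝ × ℝ} {δ : ℝ} (h : dist η ξ < δ) :
    |η.1.1 - ξ.1.1| < δ ∧ |η.1.2 - ξ.1.2| < δ ∧ |η.2.1 - ξ.2.1| < δ ∧
    |η.2.2.1.1 - ξ.2.2.1.1| < δ ∧ |η.2.2.1.2 - ξ.2.2.1.2| < δ ∧
    |η.2.2.2.1 - ξ.2.2.2.1| < δ ∧ |η.2.2.2.2 - ξ.2.2.2.2| < δ := by
  simp only [Prod.dist_eq, max_lt_iff, Real.dist_eq] at h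
  exact ⟨h.1.1, h.1.2, h.2.1, h.2.2.1.1, h.2.2.1.2, h.2.2.2.1, h.2.2.2.2⟩

lemma hamil_bounds {W : Type*} [Nonempty W] {β T t x p' A Ca Cb Cf Mc : ℝ}
    {a b : ℝ → W → ℝ} {f : ℝ → ℝ → W → ℝ}
    (hβ : 0 < β) (ht : t ∈ Set.Icc 0 T)
    (hCa : ∀ w, |a x w| ≤ Ca) (hCb : ∀ w, |b x w| ≤ Cb)
    (hCf : ∀ w, |f t x w| ≤ Cf)
    (hp : |p'| ≤ Mc) (hA : |A| ≤ Mc) (hMc : 0 ≤ Mc) :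
    |⨆ w, ((1:ℝ)/2) * b x w ^ 2 * A + a x w * p' + Real.exp (β * t) * f t x w| ≤
      (1/2) * Cb ^ 2 * Mc + Ca * Mc + Real.exp (β * T) * Cf := by
  set B := (1/2) * Cb ^ 2 * Mc + Ca * Mc + Real.exp (β * T) * Cf with hB
  have hCa0 : 0 ≤ Ca := le_trans (abs_nonneg _) (hCa (Classical.arbitrary W))
  have hCf0 : 0 ≤ Cf := le_trans (abs_nonneg _) (hCf (Classical.arbitrary W))
  have hexp : Real.exp (β * t) ≤ Real.exp (β * T) :=
    Real.exp_le_exp.2 (mul_le_mul_of_nonneg_left ht.2 hβ.le)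
  have hw : ∀ w, |((1:ℝ)/2) * b x w ^ 2 * A + a x w * p' + Real.exp (β * t) * f t x w| ≤ B := by
    intro w
    have hb2 : b x w ^ 2 ≤ Cb ^ 2 := by
      calc b x w ^ 2 = |b x w| ^ 2 := (sq_abs _).symm
        _ ≤ Cb ^ 2 := pow_le_pow_left₀ (abs_nonneg _) (hCb w) 2
    have h1 : |((1:ℝ)/2) * b x w ^ 2 * A| ≤ (1/2) * Cb ^ 2 * Mc := by
      rw [abs_mul, abs_mul]
      have e1 : |(1:ℝ)/2| = 1/2 := by norm_num
      rw [e1, abs_of_nonneg (sq_nonneg (b x w))]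
      have : (1:ℝ)/2 * b x w ^ 2 ≤ 1/2 * Cb ^ 2 := by linarith
      exact mul_le_mul this hA (abs_nonneg _) (by positivity)
    have h2 : |a x w * p'| ≤ Ca * Mc := by
      rw [abs_mul]
      exact mul_le_mul (hCa w) hp (abs_nonneg _) hCa0
    have h3 : |Real.exp (β * t) * f t x w| ≤ Real.exp (β * T) * Cf := by
      rw [abs_mul, abs_of_pos (Real.exp_pos _)]
      exact mul_le_mul hexp (hCf w) (abs_nonneg _) (Real.exp_pos _).le
    calc |((1:ℝ)/2) * b x w ^ 2 * A + a x w * p' + Real.exp (β * t) * f t x w|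
        ≤ |((1:ℝ)/2) * b x w ^ 2 * A + a x w * p'| + |Real.exp (β * t) * f t x w| :=
          abs_add_le _ _
      _ ≤ |((1:ℝ)/2) * b x w ^ 2 * A| + |a x w * p'| + |Real.exp (β * t) * f t x w| := by
          linarith [abs_add_le (((1:ℝ)/2) * b x w ^ 2 * A) (a x w * p')]
      _ ≤ B := by rw [hB]; linarith
  have hbdd : BddAbove (Set.range fun w =>
      ((1:ℝ)/2) * b x w ^ 2 * A + a x w * p' + Real.exp (β * t) * f t x w) := by
    refine ⟨B, ?_⟩
    rintro _ ⟨w, rfl⟩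
    exact le_trans (le_abs_self _) (hw w)
  rw [abs_le]
  constructor
  · refine le_trans ?_ (le_ciSup hbdd (Classical.arbitrary W))
    linarith [abs_le.1 (hw (Classical.arbitrary W))]
  · exact ciSup_le fun w => le_trans (le_abs_self _) (hw w)

set_option maxHeartbeats 1000000 in
theorem hjb_sub_half
    (T : ℝ) (hT : 0 < T) (β : ℝ) (hβ : 0 < β)
    {W : Type*} [MetricSpace W] [CompactSpace W] [Nonempty W]
    {Y : Type*} [MetricSpace Y]
    (Z : ℝ × ℝ → NonemptyCompacts Y) (hZ : ContinuousOn Z (Omb T))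
    (f : ℝ → ℝ → W → ℝ)
    (hfb : ∃ C, ∀ t ∈ Set.Icc (0 : ℝ) T, ∀ (x : ℝ) (w : W), |f t x w| ≤ C)
    (g : ℝ → ℝ) (hgc : Continuous g)
    (Γ : ℝ → ℝ → Y → ℝ)
    (hΓ : ContinuousOn (fun p : ℝ × ℝ × Y => Γ p.1 p.2.1 p.2.2)
      {p : ℝ × ℝ × Y | p.1 ∈ Set.Icc 0 T})
    (K : ℝ → ℝ → Y → ℝ)
    (hK : ContinuousOn (fun p : ℝ × ℝ × Y => K p.1 p.2.1 p.2.2)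
      {p : ℝ × ℝ × Y | p.1 ∈ Set.Icc 0 T})
    (hKneg : ∃ δ > (0 : ℝ), ∀ t ∈ Set.Icc (0 : ℝ) T, ∀ (x : ℝ) (z : Y), K t x z ≤ -δ)
    (a b : ℝ → W → ℝ)
    (hac : Continuous fun p : ℝ × W => a p.1 p.2)
    (hbc : Continuous fun p : ℝ × W => b p.1 p.2)
    (V : ℝ × ℝ → ℝ) (hVb : ∃ C, ∀ p ∈ Omb T, |V p| ≤ C)
    (hVu : UpperSemicontinuousOn V (Omb T)) (hsub : IsSubsolB T β a b f g Z Γ K V)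
    (x₀ : ℝ) :
    min (V (T, x₀) - Real.exp (β * T) * g x₀) (V (T, x₀) - MopB β Z Γ K V (T, x₀)) ≤ 0 := by
  classical
  -- preliminary bounds and constants
  obtain ⟨C₀, hC₀⟩ := hVb
  set C := max C₀ 0 with hC
  have hV : ∀ p ∈ Omb T, |V p| ≤ C := fun p hp => (hC₀ p hp).trans (le_max_left _ _)
  have hC0 : (0:ℝ) ≤ C := le_max_right _ _
  clear_value C
  obtain ⟨δK, hδK, hKn⟩ := hKneg
  have hKle : ∀ t ∈ Set.Icc (0:ℝ) T, ∀ x z, K t x z ≤ 0 :=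
    fun t ht x z => (hKn t ht x z).trans (by linarith)
  obtain ⟨Cf, hCf⟩ := hfb
  obtain ⟨Ca, hCa⟩ := (isCompact_Icc.prod isCompact_univ :
      IsCompact ((Set.Icc (x₀-3) (x₀+3)) ×ˢ (Set.univ : Set W))).exists_bound_of_continuousOn
    hac.continuousOn
  obtain ⟨Cb, hCb⟩ := (isCompact_Icc.prod isCompact_univ :
      IsCompact ((Set.Icc (x₀-3) (x₀+3)) ×ˢ (Set.univ : Set W))).exists_bound_of_continuousOn
    hbc.continuousOn
  have hCa' : ∀ x ∈ Set.Icc (x₀-3) (x₀+3), ∀ w : W, |a x w| ≤ Ca := by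
    intro x hx w; simpa [Real.norm_eq_abs] using hCa (x, w) ⟨hx, trivial⟩
  have hCb' : ∀ x ∈ Set.Icc (x₀-3) (x₀+3), ∀ w : W, |b x w| ≤ Cb := by
    intro x hx w; simpa [Real.norm_eq_abs] using hCb (x, w) ⟨hx, trivial⟩
  have hCf' : ∀ t ∈ Set.Icc (0:ℝ) T, ∀ x w, |f t x w| ≤ Cf := hCf
  have hTmem : ((T, x₀) : ℝ × ℝ) ∈ Omb T := mem_Omb.2 ⟨hT.le, le_refl T⟩
  -- it suffices to prove the estimate up to `3 ε`
  suffices H : ∀ ε : ℝ, 0 < ε →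
      min (V (T, x₀) - Real.exp (β * T) * g x₀) (V (T, x₀) - MopB β Z Γ K V (T, x₀)) ≤ 3 * ε by
    by_contra hcon
    push_neg at hcon
    have := H (min (V (T, x₀) - Real.exp (β * T) * g x₀)
      (V (T, x₀) - MopB β Z Γ K V (T, x₀)) / 6) (by linarith)
    linarith
  intro ε hε
  -- δ₁ : upper semicontinuity of the intervention operator at (T,x₀)
  obtain ⟨δ₁, hδ₁, hMu⟩ := mopB_usc_at (β := β) hZ hΓ hK hKle hV hVu hTmem hε
  -- δ₂ : continuity of the discounted terminal payoff at x₀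
  obtain ⟨δ₂, hδ₂, hgd⟩ := Metric.continuous_iff.1 (continuous_const.mul hgc : Continuous
    (fun x : ℝ => Real.exp (β * T) * g x)) x₀ ε hε
  set m := min 1 (min δ₁ δ₂) with hm
  have hmpos : 0 < m := lt_min one_pos (lt_min hδ₁ hδ₂)
  have hm1 : m ≤ 1 := min_le_left _ _
  set M := max (2*C+1) (2*C/m^2 + 1) with hMdef
  have hM1 : (1:ℝ) ≤ M := le_trans (by linarith) (le_max_left _ _)
  have hMpos : (0:ℝ) < M := by linarith
  set Mc := 2*M+1 with hMc
  set CS := (1/2) * Cb^2 * Mc + Ca * Mc + Real.exp (β*T) * Cf with hCS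
  have hMub : 2*C/m^2 + 1 ≤ M := le_max_right _ _
  have hmδ₁ : m ≤ δ₁ := le_trans (min_le_right _ _) (min_le_left _ _)
  have hmδ₂ : m ≤ δ₂ := le_trans (min_le_right _ _) (min_le_right _ _)
  clear_value m M
  clear_value Mc CS
  have hCa0 : 0 ≤ Ca := le_trans (abs_nonneg _)
    (hCa' x₀ (Set.mem_Icc.2 ⟨by linarith, by linarith⟩) (Classical.arbitrary W))
  have hCf0 : 0 ≤ Cf := le_trans (abs_nonneg _)
    (hCf' T ⟨hT.le, le_refl T⟩ x₀ (Classical.arbitrary W))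
  have hMc0 : (0:ℝ) ≤ Mc := by rw [hMc]; linarith
  have hCS0 : 0 ≤ CS := by
    rw [hCS]
    have h1 : (0:ℝ) ≤ (1/2) * Cb^2 * Mc := mul_nonneg (by positivity) hMc0
    have h2 : (0:ℝ) ≤ Ca * Mc := mul_nonneg hCa0 hMc0
    have h3 : (0:ℝ) ≤ Real.exp (β*T) * Cf := mul_nonneg (Real.exp_pos _).le hCf0
    linarith
  set n := max (2 + β*(C+1) + CS) (2*C/m + 1) with hn
  have hn2 : 2 + β*(C+1) + CS ≤ n := le_max_left _ _
  have hn3 : 2*C/m < n := by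
    have := le_max_right (2 + β*(C+1) + CS) (2*C/m + 1)
    linarith
  have hnpos : (0:ℝ) < n := by nlinarith [mul_nonneg hβ.le (by linarith : (0:ℝ) ≤ C + 1)]
  clear_value n
  -- the compact rectangle and the maximizer
  set Q : Set (ℝ × ℝ) := Set.Icc (max 0 (T-1)) T ×ˢ Set.Icc (x₀-1) (x₀+1) with hQ
  have hQc : IsCompact Q := isCompact_Icc.prod isCompact_Icc
  have hQsub : Q ⊆ Omb T := by
    rintro q ⟨hq1, hq2⟩
    exact mem_Omb.2 ⟨(le_max_left 0 (T-1)).trans hq1.1, hq1.2⟩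
  have hTQ : ((T, x₀) : ℝ × ℝ) ∈ Q :=
    ⟨⟨max_le hT.le (by linarith), le_refl T⟩, ⟨by linarith, by linarith⟩⟩
  set φ : ℝ × ℝ → ℝ := fun q => M*(q.2-x₀)^2 + n*(T-q.1) with hφ
  have hφc : Continuous φ := by fun_prop
  have hψu : UpperSemicontinuousOn (fun q => V q - φ q) Q := by
    have h1 : UpperSemicontinuousOn V Q := hVu.mono hQsub
    have h2 : UpperSemicontinuousOn (fun q => -φ q) Q :=
      (hφc.neg.continuousOn : ContinuousOn _ Q).upperSemicontinuousOn
    simpa [sub_eq_add_neg] using h1.add h2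
  obtain ⟨⟨tn, xn⟩, hpnQ, hmax⟩ := usc_exists_max hQc ⟨(T, x₀), hTQ⟩ hψu
  have hpnOmb : ((tn, xn) : ℝ × ℝ) ∈ Omb T := hQsub hpnQ
  have htn : tn ∈ Set.Icc (0:ℝ) T := mem_Omb.1 hpnOmb
  have key0 : V (T, x₀) ≤ V (tn, xn) - (M*(xn-x₀)^2 + n*(T-tn)) := by
    have := hmax (T, x₀) hTQ
    simp only [hφ] at this
    norm_num at this
    linarith
  have hVpn := abs_le.1 (hV _ hpnOmb)
  have hVT := abs_le.1 (hV _ hTmem)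
  have hpen : M*(xn-x₀)^2 + n*(T-tn) ≤ 2*C := by linarith
  have hsqn : (0:ℝ) ≤ M*(xn-x₀)^2 := by positivity
  have htnn : (0:ℝ) ≤ n*(T-tn) := mul_nonneg hnpos.le (by linarith [htn.2])
  have hVTpn : V (T, x₀) ≤ V (tn, xn) := by linarith
  have hMm : 2*C < M * m^2 := by
    have h1 : 2*C/m^2 + 1 ≤ M := hMub
    have h2 : (0:ℝ) < m^2 := by positivity
    have h4 : (2*C/m^2 + 1) * m^2 = 2*C + m^2 := by field_simp
    have h5 := mul_le_mul_of_nonneg_right h1 h2.le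
    linarith
  have hx2 : (xn-x₀)^2 < m^2 := by
    have h6 : M * (xn-x₀)^2 < M * m^2 := by linarith
    exact (mul_lt_mul_iff_right₀ hMpos).1 h6
  have hxm : |xn - x₀| < m := abs_lt_of_sq_lt_sq hx2 hmpos.le
  have htm : T - tn < m := by
    have h1 : 2*C < n * m := by
      have hid : 2*C/m * m = 2*C := div_mul_cancel₀ _ hmpos.ne'
      have := mul_lt_mul_of_pos_right hn3 hmpos
      linarith
    by_contra hcon
    push_neg at hcon
    have := mul_le_mul_of_nonneg_left hcon hnpos.le
    linarith
  have hdistpn : dist ((tn, xn) : ℝ × ℝ) (T, x₀) < m := by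
    rw [Prod.dist_eq]
    refine max_lt ?_ ?_
    · rw [Real.dist_eq, abs_of_nonpos (by linarith [htn.2])]
      linarith
    · rwa [Real.dist_eq]
  have hxm1 := abs_lt.1 hxm
  -- local max on the domain
  have hloc : IsLocalMaxOn (fun q => V q - φ q) (Omb T) (tn, xn) := by
    show ∀ᶠ q in 𝓝[Omb T] (tn, xn), _
    refine mem_nhdsWithin.2 ⟨Set.Ioi (T-1) ×ˢ Set.Ioo (x₀-1) (x₀+1),
      isOpen_Ioi.prod isOpen_Ioo,
      ⟨Set.mem_Ioi.2 (by linarith), Set.mem_Ioo.2 ⟨by linarith, by linarith⟩⟩, ?_⟩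
    rintro q ⟨⟨hq1, hq2⟩, hqOmb⟩
    refine hmax q ⟨⟨max_le (mem_Omb.1 hqOmb).1 (le_of_lt hq1), (mem_Omb.1 hqOmb).2⟩,
      ⟨hq2.1.le, hq2.2.le⟩⟩
  -- the test function is C12
  have hc12 : C12 φ (fun _ => -n) (fun q => 2*M*(q.2-x₀)) (fun _ => 2*M) := by
    refine ⟨hφc, continuous_const, by fun_prop, continuous_const, ?_, ?_, ?_⟩
    · intro p
      simp only [hφ]
      have h := (((hasDerivAt_id p.1).const_sub T).const_mul n).const_add (M*(p.2-x₀)^2)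
      simpa using h
    · intro p
      simp only [hφ]
      have h := ((((hasDerivAt_id p.2).sub_const x₀).pow 2).const_mul M).add_const (n*(T-p.1))
      exact h.congr_deriv (by simp only [id_eq, Nat.cast_ofNat]; ring)
    · intro p
      have h := ((hasDerivAt_id p.2).sub_const x₀).const_mul (2*M)
      simpa using h
  set ℓn := MopB β Z Γ K V (tn, xn) with hℓn
  have hle : lowEnv T (Fb T β a b f g)
      (((tn, xn) : ℝ × ℝ), V (tn, xn), ((-n : ℝ), 2*M*(xn-x₀)), 2*M, ℓn) ≤ 0 :=
    hsub φ (fun _ => -n) (fun q => 2*M*(q.2-x₀)) (fun _ => 2*M) hc12 (tn, xn) hpnOmb hloc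
  set ξ : (ℝ × ℝ) × ℝ × (ℝ × ℝ) × ℝ × ℝ :=
    (((tn, xn) : ℝ × ℝ), V (tn, xn), ((-n : ℝ), 2*M*(xn-x₀)), 2*M, ℓn) with hξ
  set Sd : Set ((ℝ × ℝ) × ℝ × (ℝ × ℝ) × ℝ × ℝ) := {η | η.1 ∈ Omb T} with hSd
  have hξS : ξ ∈ Sd := hpnOmb
  haveI : (𝓝[Sd] ξ).NeBot := nhdsWithin_neBot_of_mem hξS
  -- δ₃ : continuity of the discounted terminal payoff at xn
  obtain ⟨δ₃, hδ₃, hgd3⟩ := Metric.continuous_iff.1 (continuous_const.mul hgc : Continuous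
    (fun x : ℝ => Real.exp (β * T) * g x)) xn ε hε
  set δ' := min 1 (min ε δ₃) with hδ'
  have hδ'pos : 0 < δ' := lt_min one_pos (lt_min hε hδ₃)
  have hδ'1 : δ' ≤ 1 := min_le_left _ _
  have hδ'ε : δ' ≤ ε := le_trans (min_le_right _ _) (min_le_left _ _)
  have hδ'3 : δ' ≤ δ₃ := le_trans (min_le_right _ _) (min_le_right _ _)
  clear_value δ'
  have h1ev : ∀ᶠ η in 𝓝[Sd] ξ, dist η ξ < δ' :=
    eventually_nhdsWithin_of_eventually_nhds
      (Metric.eventually_nhds_iff.2 ⟨δ', hδ'pos, fun {y} hy => hy⟩)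
  have h2ev : ∀ᶠ η in 𝓝[Sd] ξ, η ∈ Sd := eventually_mem_nhdsWithin
  set X := V (tn, xn) - ℓn - 2*ε with hX
  set Ygb := V (tn, xn) - Real.exp (β*T) * g xn - 2*ε with hYgb
  have claim : ∀ᶠ η in 𝓝[Sd] ξ, min 1 (min X Ygb) ≤ Fb T β a b f g η := by
    filter_upwards [h1ev, h2ev] with η hd hmem
    obtain ⟨⟨t, x⟩, r, ⟨q, p'⟩, A, l⟩ := η
    obtain ⟨hdt, hdx, hdr, hdq, hdp, hdA, hdl⟩ := tuple_dist_lt hd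
    simp only [hξ] at hdt hdx hdr hdq hdp hdA hdl
    have htI : t ∈ Set.Icc (0:ℝ) T := mem_Omb.1 hmem
    have hrV : |r - V (tn, xn)| < ε := lt_of_lt_of_le hdr hδ'ε
    have hlℓ : |l - ℓn| < ε := lt_of_lt_of_le hdl hδ'ε
    have hrl : X ≤ r - l := by
      rw [hX]
      have := abs_lt.1 hrV
      have := abs_lt.1 hlℓ
      linarith
    by_cases hlt : t < T
    · rw [show Fb T β a b f g ((t, x), r, (q, p'), A, l) =
          min (-q + β * r -
            ⨆ w, (((1 : ℝ) / 2) * b x w ^ 2 * A + a x w * p' + Real.exp (β * t) * f t x w))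
            (r - l) from by rw [Fb]; rw [if_pos hlt]]
      refine le_min ?_ (le_trans (min_le_right _ _) (le_trans (min_le_left _ _) hrl))
      refine le_trans (min_le_left _ _) ?_
      -- branch1 ≥ 1
      have hxx : |x - x₀| ≤ 2 := by
        have := abs_lt.1 hdx
        have := abs_lt.1 hxm
        rw [abs_le]
        constructor <;> linarith [hδ'1]
      have hxI : x ∈ Set.Icc (x₀-3) (x₀+3) := by
        have := abs_le.1 hxx
        constructor <;> linarith
      have hp'b : |p'| ≤ Mc := by
        have h1 := abs_lt.1 hdp
        have h2 : |2*M*(xn-x₀)| ≤ 2*M := by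
          rw [abs_mul, abs_of_nonneg (by linarith : (0:ℝ) ≤ 2*M)]
          have h9 := mul_le_mul_of_nonneg_left (le_of_lt (lt_of_lt_of_le hxm hm1))
            (by linarith : (0:ℝ) ≤ 2*M)
          linarith only [h9]
        have h3 := abs_le.1 h2
        rw [abs_le, hMc]
        constructor <;> linarith [hδ'1]
      have hAb : |A| ≤ Mc := by
        have h1 := abs_lt.1 hdA
        rw [abs_le, hMc]
        constructor <;> linarith [hδ'1]
      have hSb := hamil_bounds (a := a) (b := b) (f := f) hβ htI (hCa' x hxI) (hCb' x hxI)
        (hCf' t htI x) hp'b hAb (by rw [hMc]; linarith)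
      rw [← hCS] at hSb
      have hSle := (abs_le.1 hSb).2
      have hq1 : n - 1 ≤ -q := by
        have := abs_lt.1 hdq
        linarith [hδ'1]
      have hr1 : V (tn, xn) - 1 ≤ r := by
        have := abs_lt.1 hdr
        linarith [hδ'1]
      have hβr : -(β*(C+1)) ≤ β * r := by
        have hr2 : -(C+1) ≤ r := by linarith only [hr1, hVpn]
        have h9 := mul_le_mul_of_nonneg_left hr2 hβ.le
        linarith only [h9]
      linarith only [hSle, hq1, hβr, hn2]
    · rw [show Fb T β a b f g ((t, x), r, (q, p'), A, l) =
          min (r - Real.exp (β * T) * g x) (r - l) from by rw [Fb]; rw [if_neg hlt]]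
      refine le_min ?_ (le_trans (min_le_right _ _) (le_trans (min_le_left _ _) hrl))
      refine le_trans (min_le_right _ _) (le_trans (min_le_right _ _) ?_)
      rw [hYgb]
      have hgx : |Real.exp (β*T) * g x - Real.exp (β*T) * g xn| < ε := by
        have := hgd3 x (by rw [Real.dist_eq]; exact lt_of_lt_of_le hdx hδ'3)
        rwa [Real.dist_eq] at this
      have := abs_lt.1 hgx
      have := abs_lt.1 hrV
      linarith
  -- lower bound on the liminf
  have hub : ∀ᶠ η in 𝓝[Sd] ξ, Fb T β a b f g η ≤ V (tn, xn) - ℓn + 2*ε := by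
    filter_upwards [h1ev] with η hd
    obtain ⟨⟨t, x⟩, r, ⟨q, p'⟩, A, l⟩ := η
    obtain ⟨hdt, hdx, hdr, hdq, hdp, hdA, hdl⟩ := tuple_dist_lt hd
    simp only [hξ] at hdr hdl
    have h1 := abs_lt.1 (lt_of_lt_of_le hdr hδ'ε)
    have h2 := abs_lt.1 (lt_of_lt_of_le hdl hδ'ε)
    have hrl : r - l ≤ V (tn, xn) - ℓn + 2*ε := by linarith
    by_cases hlt : t < T
    · rw [show Fb T β a b f g ((t, x), r, (q, p'), A, l) =
          min (-q + β * r -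
            ⨆ w, (((1 : ℝ) / 2) * b x w ^ 2 * A + a x w * p' + Real.exp (β * t) * f t x w))
            (r - l) from by rw [Fb]; rw [if_pos hlt]]
      exact le_trans (min_le_right _ _) hrl
    · rw [show Fb T β a b f g ((t, x), r, (q, p'), A, l) =
          min (r - Real.exp (β * T) * g x) (r - l) from by rw [Fb]; rw [if_neg hlt]]
      exact le_trans (min_le_right _ _) hrl
  have hcob : (𝓝[Sd] ξ).IsCoboundedUnder (· ≥ ·) (Fb T β a b f g) :=
    Filter.isCoboundedUnder_ge_of_eventually_le _ hub
  have hlow : min 1 (min X Ygb) ≤ lowEnv T (Fb T β a b f g) ξ := by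
    rw [lowEnv]
    exact Filter.le_liminf_of_le hcob claim
  have hXY : min X Ygb ≤ 0 := by
    by_contra hpos
    push_neg at hpos
    have h1 : (0:ℝ) < min 1 (min X Ygb) := lt_min one_pos hpos
    rw [hξ] at hlow
    linarith
  -- conclude
  have hℓb : ℓn ≤ MopB β Z Γ K V (T, x₀) + ε := by
    exact hMu (tn, xn) hpnOmb (lt_of_lt_of_le hdistpn hmδ₁)
  have hgb : Real.exp (β*T) * g xn ≤ Real.exp (β*T) * g x₀ + ε := by
    have := hgd xn (by
      rw [Real.dist_eq]
      exact lt_of_lt_of_le hxm hmδ₂)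
    rw [Real.dist_eq] at this
    simp only [Pi.mul_apply] at this
    linarith [abs_lt.1 this]
  rcases min_le_iff.1 hXY with h | h
  · -- intervention branch
    refine le_trans (min_le_right _ _) ?_
    rw [hX] at h
    linarith
  · -- terminal payoff branch
    refine le_trans (min_le_left _ _) ?_
    rw [hYgb] at h
    linarith

set_option maxHeartbeats 1000000 in
theorem hjb_sup_half
    (T : ℝ) (hT : 0 < T) (β : ℝ) (hβ : 0 < β)
    {W : Type*} [MetricSpace W] [CompactSpace W] [Nonempty W]
    {Y : Type*} [MetricSpace Y]
    (Z : ℝ × ℝ → NonemptyCompacts Y) (hZ : ContinuousOn Z (Omb T))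
    (f : ℝ → ℝ → W → ℝ)
    (hfb : ∃ C, ∀ t ∈ Set.Icc (0 : ℝ) T, ∀ (x : ℝ) (w : W), |f t x w| ≤ C)
    (g : ℝ → ℝ) (hgc : Continuous g) (hgb : ∃ C, ∀ x, |g x| ≤ C)
    (Γ : ℝ → ℝ → Y → ℝ)
    (hΓ : ContinuousOn (fun p : ℝ × ℝ × Y => Γ p.1 p.2.1 p.2.2)
      {p : ℝ × ℝ × Y | p.1 ∈ Set.Icc 0 T})
    (K : ℝ → ℝ → Y → ℝ)
    (hK : ContinuousOn (fun p : ℝ × ℝ × Y => K p.1 p.2.1 p.2.2)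
      {p : ℝ × ℝ × Y | p.1 ∈ Set.Icc 0 T})
    (hKneg : ∃ δ > (0 : ℝ), ∀ t ∈ Set.Icc (0 : ℝ) T, ∀ (x : ℝ) (z : Y), K t x z ≤ -δ)
    (a b : ℝ → W → ℝ)
    (hac : Continuous fun p : ℝ × W => a p.1 p.2)
    (hbc : Continuous fun p : ℝ × W => b p.1 p.2)
    (V : ℝ × ℝ → ℝ) (hVb : ∃ C, ∀ p ∈ Omb T, |V p| ≤ C)
    (hVl : LowerSemicontinuousOn V (Omb T)) (hsup : IsSupersolB T β a b f g Z Γ K V)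
    (x₀ : ℝ) :
    0 ≤ min (V (T, x₀) - Real.exp (β * T) * g x₀) (V (T, x₀) - MopB β Z Γ K V (T, x₀)) := by
  classical
  obtain ⟨C₀, hC₀⟩ := hVb
  set C := max C₀ 0 with hC
  have hV : ∀ p ∈ Omb T, |V p| ≤ C := fun p hp => (hC₀ p hp).trans (le_max_left _ _)
  have hC0 : (0:ℝ) ≤ C := le_max_right _ _
  clear_value C
  obtain ⟨δK, hδK, hKn⟩ := hKneg
  have hKle : ∀ t ∈ Set.Icc (0:ℝ) T, ∀ x z, K t x z ≤ 0 :=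
    fun t ht x z => (hKn t ht x z).trans (by linarith)
  obtain ⟨Cf, hCf⟩ := hfb
  obtain ⟨Cg, hCg⟩ := hgb
  obtain ⟨Ca, hCa⟩ := (isCompact_Icc.prod isCompact_univ :
      IsCompact ((Set.Icc (x₀-3) (x₀+3)) ×ˢ (Set.univ : Set W))).exists_bound_of_continuousOn
    hac.continuousOn
  obtain ⟨Cb, hCb⟩ := (isCompact_Icc.prod isCompact_univ :
      IsCompact ((Set.Icc (x₀-3) (x₀+3)) ×ˢ (Set.univ : Set W))).exists_bound_of_continuousOn
    hbc.continuousOn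
  have hCa' : ∀ x ∈ Set.Icc (x₀-3) (x₀+3), ∀ w : W, |a x w| ≤ Ca := by
    intro x hx w; simpa [Real.norm_eq_abs] using hCa (x, w) ⟨hx, trivial⟩
  have hCb' : ∀ x ∈ Set.Icc (x₀-3) (x₀+3), ∀ w : W, |b x w| ≤ Cb := by
    intro x hx w; simpa [Real.norm_eq_abs] using hCb (x, w) ⟨hx, trivial⟩
  have hCf' : ∀ t ∈ Set.Icc (0:ℝ) T, ∀ x w, |f t x w| ≤ Cf := hCf
  have hTmem : ((T, x₀) : ℝ × ℝ) ∈ Omb T := mem_Omb.2 ⟨hT.le, le_refl T⟩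
  suffices H : ∀ ε : ℝ, 0 < ε → ε ≤ 1/2 →
      -(4*ε) ≤ min (V (T, x₀) - Real.exp (β * T) * g x₀)
        (V (T, x₀) - MopB β Z Γ K V (T, x₀)) by
    by_contra hcon
    push_neg at hcon
    set mn := min (V (T, x₀) - Real.exp (β * T) * g x₀)
      (V (T, x₀) - MopB β Z Γ K V (T, x₀)) with hmn
    have hε1 : (0:ℝ) < min (-mn/8) (1/2) := lt_min (by linarith) (by norm_num)
    have := H (min (-mn/8) (1/2)) hε1 (min_le_right _ _)
    have h2 : min (-mn/8) (1/2) ≤ -mn/8 := min_le_left _ _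
    linarith
  intro ε hε hε12
  obtain ⟨δ₁, hδ₁, hMl⟩ := mopB_lsc_at (β := β) hZ hΓ hK hKle hV hVl hTmem hε
  obtain ⟨δ₂, hδ₂, hgd⟩ := Metric.continuous_iff.1 (continuous_const.mul hgc : Continuous
    (fun x : ℝ => Real.exp (β * T) * g x)) x₀ ε hε
  set m := min 1 (min δ₁ δ₂) with hm
  have hmpos : 0 < m := lt_min one_pos (lt_min hδ₁ hδ₂)
  have hm1 : m ≤ 1 := min_le_left _ _
  set M := max (2*C+1) (2*C/m^2 + 1) with hMdef
  have hM1 : (1:ℝ) ≤ M := le_trans (by linarith) (le_max_left _ _)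
  have hMpos : (0:ℝ) < M := by linarith
  set Mc := 2*M+1 with hMc
  set CS := (1/2) * Cb^2 * Mc + Ca * Mc + Real.exp (β*T) * Cf with hCS
  have hMub : 2*C/m^2 + 1 ≤ M := le_max_right _ _
  have hmδ₁ : m ≤ δ₁ := le_trans (min_le_right _ _) (min_le_left _ _)
  have hmδ₂ : m ≤ δ₂ := le_trans (min_le_right _ _) (min_le_right _ _)
  clear_value m M
  clear_value Mc CS
  have hCa0 : 0 ≤ Ca := le_trans (abs_nonneg _)
    (hCa' x₀ (Set.mem_Icc.2 ⟨by linarith, by linarith⟩) (Classical.arbitrary W))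
  have hCf0 : 0 ≤ Cf := le_trans (abs_nonneg _)
    (hCf' T ⟨hT.le, le_refl T⟩ x₀ (Classical.arbitrary W))
  have hMc0 : (0:ℝ) ≤ Mc := by rw [hMc]; linarith
  have hCS0 : 0 ≤ CS := by
    rw [hCS]
    have h1 : (0:ℝ) ≤ (1/2) * Cb^2 * Mc := mul_nonneg (by positivity) hMc0
    have h2 : (0:ℝ) ≤ Ca * Mc := mul_nonneg hCa0 hMc0
    have h3 : (0:ℝ) ≤ Real.exp (β*T) * Cf := mul_nonneg (Real.exp_pos _).le hCf0
    linarith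
  set n := max (2 + β*(C+1) + CS) (2*C/m + 1) with hn
  have hn2 : 2 + β*(C+1) + CS ≤ n := le_max_left _ _
  have hn3 : 2*C/m < n := by
    have := le_max_right (2 + β*(C+1) + CS) (2*C/m + 1)
    linarith
  have hnpos : (0:ℝ) < n := by nlinarith [mul_nonneg hβ.le (by linarith : (0:ℝ) ≤ C + 1)]
  clear_value n
  set Q : Set (ℝ × ℝ) := Set.Icc (max 0 (T-1)) T ×ˢ Set.Icc (x₀-1) (x₀+1) with hQ
  have hQc : IsCompact Q := isCompact_Icc.prod isCompact_Icc
  have hQsub : Q ⊆ Omb T := by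
    rintro q ⟨hq1, hq2⟩
    exact mem_Omb.2 ⟨(le_max_left 0 (T-1)).trans hq1.1, hq1.2⟩
  have hTQ : ((T, x₀) : ℝ × ℝ) ∈ Q :=
    ⟨⟨max_le hT.le (by linarith), le_refl T⟩, ⟨by linarith, by linarith⟩⟩
  set φ : ℝ × ℝ → ℝ := fun q => M*(q.2-x₀)^2 + n*(T-q.1) with hφ
  have hφc : Continuous φ := by fun_prop
  have hψl : LowerSemicontinuousOn (fun q => V q + φ q) Q := by
    have h1 : LowerSemicontinuousOn V Q := hVl.mono hQsub
    have h2 : LowerSemicontinuousOn φ Q :=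
      (hφc.continuousOn : ContinuousOn _ Q).lowerSemicontinuousOn
    exact h1.add h2
  obtain ⟨⟨tn, xn⟩, hpnQ, hmin⟩ := lsc_exists_min hQc ⟨(T, x₀), hTQ⟩ hψl
  have hpnOmb : ((tn, xn) : ℝ × ℝ) ∈ Omb T := hQsub hpnQ
  have htn : tn ∈ Set.Icc (0:ℝ) T := mem_Omb.1 hpnOmb
  have key0 : V (tn, xn) + (M*(xn-x₀)^2 + n*(T-tn)) ≤ V (T, x₀) := by
    have := hmin (T, x₀) hTQ
    simp only [hφ] at this
    norm_num at this
    linarith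
  have hVpn := abs_le.1 (hV _ hpnOmb)
  have hVT := abs_le.1 (hV _ hTmem)
  have hpen : M*(xn-x₀)^2 + n*(T-tn) ≤ 2*C := by linarith
  have hsqn : (0:ℝ) ≤ M*(xn-x₀)^2 := by positivity
  have htnn : (0:ℝ) ≤ n*(T-tn) := mul_nonneg hnpos.le (by linarith [htn.2])
  have hVTpn : V (tn, xn) ≤ V (T, x₀) := by linarith
  have hMm : 2*C < M * m^2 := by
    have h1 : 2*C/m^2 + 1 ≤ M := hMub
    have h2 : (0:ℝ) < m^2 := by positivity
    have h4 : (2*C/m^2 + 1) * m^2 = 2*C + m^2 := by field_simp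
    have h5 := mul_le_mul_of_nonneg_right h1 h2.le
    linarith
  have hx2 : (xn-x₀)^2 < m^2 := by
    have h6 : M * (xn-x₀)^2 < M * m^2 := by linarith
    exact (mul_lt_mul_iff_right₀ hMpos).1 h6
  have hxm : |xn - x₀| < m := abs_lt_of_sq_lt_sq hx2 hmpos.le
  have htm : T - tn < m := by
    have h1 : 2*C < n * m := by
      have hid : 2*C/m * m = 2*C := div_mul_cancel₀ _ hmpos.ne'
      have := mul_lt_mul_of_pos_right hn3 hmpos
      linarith
    by_contra hcon
    push_neg at hcon
    have := mul_le_mul_of_nonneg_left hcon hnpos.le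
    linarith
  have hdistpn : dist ((tn, xn) : ℝ × ℝ) (T, x₀) < m := by
    rw [Prod.dist_eq]
    refine max_lt ?_ ?_
    · rw [Real.dist_eq, abs_of_nonpos (by linarith [htn.2])]
      linarith
    · rwa [Real.dist_eq]
  have hxm1 := abs_lt.1 hxm
  have hloc : IsLocalMinOn (fun q => V q - (fun q : ℝ × ℝ => -(M*(q.2-x₀)^2 + n*(T-q.1))) q)
      (Omb T) (tn, xn) := by
    show ∀ᶠ q in 𝓝[Omb T] (tn, xn), _
    refine mem_nhdsWithin.2 ⟨Set.Ioi (T-1) ×ˢ Set.Ioo (x₀-1) (x₀+1),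
      isOpen_Ioi.prod isOpen_Ioo,
      ⟨Set.mem_Ioi.2 (by linarith), Set.mem_Ioo.2 ⟨by linarith, by linarith⟩⟩, ?_⟩
    rintro q ⟨⟨hq1, hq2⟩, hqOmb⟩
    have hqQ : q ∈ Q := ⟨⟨max_le (mem_Omb.1 hqOmb).1 (le_of_lt hq1), (mem_Omb.1 hqOmb).2⟩,
      ⟨hq2.1.le, hq2.2.le⟩⟩
    have := hmin q hqQ
    simp only [hφ] at this
    show V (tn, xn) - -(M*(xn-x₀)^2 + n*(T-tn)) ≤ V q - -(M*(q.2-x₀)^2 + n*(T-q.1))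
    rw [sub_neg_eq_add, sub_neg_eq_add]
    exact this
  have hc12 : C12 (fun q : ℝ × ℝ => -(M*(q.2-x₀)^2 + n*(T-q.1))) (fun _ => n)
      (fun q => -(2*M*(q.2-x₀))) (fun _ => -(2*M)) := by
    refine ⟨by fun_prop, continuous_const, by fun_prop, continuous_const, ?_, ?_, ?_⟩
    · intro p
      have h := ((((hasDerivAt_id p.1).const_sub T).const_mul n).const_add
        (M*(p.2-x₀)^2)).neg
      simpa [Pi.neg_def] using h
    · intro p
      have h := (((((hasDerivAt_id p.2).sub_const x₀).pow 2).const_mul M).add_const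
        (n*(T-p.1))).neg
      exact h.congr_deriv (by simp only [id_eq, Nat.cast_ofNat]; ring)
    · intro p
      have h := (((hasDerivAt_id p.2).sub_const x₀).const_mul (2*M)).neg
      simpa [Pi.neg_def] using h
  set ℓn := MopB β Z Γ K V (tn, xn) with hℓn
  have hge : 0 ≤ upEnv T (Fb T β a b f g)
      (((tn, xn) : ℝ × ℝ), V (tn, xn), ((n : ℝ), -(2*M*(xn-x₀))), -(2*M), ℓn) :=
    hsup (fun q : ℝ × ℝ => -(M*(q.2-x₀)^2 + n*(T-q.1))) (fun _ => n)
      (fun q => -(2*M*(q.2-x₀))) (fun _ => -(2*M)) hc12 (tn, xn) hpnOmb hloc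
  set ξ : (ℝ × ℝ) × ℝ × (ℝ × ℝ) × ℝ × ℝ :=
    (((tn, xn) : ℝ × ℝ), V (tn, xn), ((n : ℝ), -(2*M*(xn-x₀))), -(2*M), ℓn) with hξ
  set Sd : Set ((ℝ × ℝ) × ℝ × (ℝ × ℝ) × ℝ × ℝ) := {η | η.1 ∈ Omb T} with hSd
  have hξS : ξ ∈ Sd := hpnOmb
  haveI : (𝓝[Sd] ξ).NeBot := nhdsWithin_neBot_of_mem hξS
  obtain ⟨δ₃, hδ₃, hgd3⟩ := Metric.continuous_iff.1 (continuous_const.mul hgc : Continuous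
    (fun x : ℝ => Real.exp (β * T) * g x)) xn ε hε
  set δ' := min 1 (min ε δ₃) with hδ'
  have hδ'pos : 0 < δ' := lt_min one_pos (lt_min hε hδ₃)
  have hδ'1 : δ' ≤ 1 := min_le_left _ _
  have hδ'ε : δ' ≤ ε := le_trans (min_le_right _ _) (min_le_left _ _)
  have hδ'3 : δ' ≤ δ₃ := le_trans (min_le_right _ _) (min_le_right _ _)
  clear_value δ'
  have h1ev : ∀ᶠ η in 𝓝[Sd] ξ, dist η ξ < δ' :=
    eventually_nhdsWithin_of_eventually_nhds
      (Metric.eventually_nhds_iff.2 ⟨δ', hδ'pos, fun {y} hy => hy⟩)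
  have h2ev : ∀ᶠ η in 𝓝[Sd] ξ, η ∈ Sd := eventually_mem_nhdsWithin
  -- a Hamiltonian bound valid on the whole δ'-neighbourhood
  have hSbound : ∀ t x p' A, t ∈ Set.Icc (0:ℝ) T → |x - xn| < δ' →
      |p' - -(2*M*(xn-x₀))| < δ' → |A - -(2*M)| < δ' →
      |⨆ w, (((1:ℝ)/2) * b x w ^ 2 * A + a x w * p' + Real.exp (β * t) * f t x w)| ≤ CS := by
    intro t x p' A htI hdx hdp hdA
    have hxx : |x - x₀| ≤ 2 := by
      have := abs_lt.1 hdx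
      rw [abs_le]
      constructor <;> linarith [hδ'1]
    have hxI : x ∈ Set.Icc (x₀-3) (x₀+3) := by
      have := abs_le.1 hxx
      constructor <;> linarith
    have hp'b : |p'| ≤ Mc := by
      have h1 := abs_lt.1 hdp
      have h2 : |(-(2*M*(xn-x₀)))| ≤ 2*M := by
        rw [abs_neg, abs_mul, abs_of_nonneg (by linarith : (0:ℝ) ≤ 2*M)]
        have h9 := mul_le_mul_of_nonneg_left (le_of_lt (lt_of_lt_of_le hxm hm1))
          (by linarith : (0:ℝ) ≤ 2*M)
        linarith only [h9]
      have h3 := abs_le.1 h2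
      rw [abs_le, hMc]
      constructor <;> linarith [hδ'1]
    have hAb : |A| ≤ Mc := by
      have h1 := abs_lt.1 hdA
      rw [abs_le, hMc]
      constructor <;> linarith [hδ'1]
    have := hamil_bounds (a := a) (b := b) (f := f) hβ htI (hCa' x hxI) (hCb' x hxI)
      (hCf' t htI x) hp'b hAb (by rw [hMc]; linarith)
    rwa [← hCS] at this
  -- eventual lower bound (coboundedness)
  set c₀ := min (-n - 1 - β*(C+1) - CS)
    (min (V (tn, xn) - ℓn - 2) (V (tn, xn) - 1 - Real.exp (β*T) * Cg)) with hc₀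
  have hlb : ∀ᶠ η in 𝓝[Sd] ξ, c₀ ≤ Fb T β a b f g η := by
    filter_upwards [h1ev, h2ev] with η hd hmem
    obtain ⟨⟨t, x⟩, r, ⟨q, p'⟩, A, l⟩ := η
    obtain ⟨hdt, hdx, hdr, hdq, hdp, hdA, hdl⟩ := tuple_dist_lt hd
    simp only [hξ] at hdt hdx hdr hdq hdp hdA hdl
    have htI : t ∈ Set.Icc (0:ℝ) T := mem_Omb.1 hmem
    have hr1 := abs_lt.1 (lt_of_lt_of_le hdr hδ'1)
    have hl1 := abs_lt.1 (lt_of_lt_of_le hdl hδ'1)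
    by_cases hlt : t < T
    · rw [show Fb T β a b f g ((t, x), r, (q, p'), A, l) =
          min (-q + β * r -
            ⨆ w, (((1 : ℝ) / 2) * b x w ^ 2 * A + a x w * p' + Real.exp (β * t) * f t x w))
            (r - l) from by rw [Fb]; rw [if_pos hlt]]
      refine le_min ?_ ?_
      · have hS := (abs_le.1 (hSbound t x p' A htI hdx hdp hdA)).2
        have hq1 := abs_lt.1 (lt_of_lt_of_le hdq hδ'1)
        have hβr : -(β*(C+1)) ≤ β * r := by
          have hr2 : -(C+1) ≤ r := by linarith only [hr1, hVpn]
          have h9 := mul_le_mul_of_nonneg_left hr2 hβ.le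
          linarith only [h9]
        refine le_trans (min_le_left _ _) ?_
        linarith
      · refine le_trans (min_le_right _ _) ?_
        refine le_trans (min_le_left _ _) ?_
        linarith
    · rw [show Fb T β a b f g ((t, x), r, (q, p'), A, l) =
          min (r - Real.exp (β * T) * g x) (r - l) from by rw [Fb]; rw [if_neg hlt]]
      refine le_min ?_ ?_
      · refine le_trans (min_le_right _ _) (le_trans (min_le_right _ _) ?_)
        have hgx : Real.exp (β*T) * g x ≤ Real.exp (β*T) * Cg := by
          have h9 := mul_le_mul_of_nonneg_left ((abs_le.1 (hCg x)).2) (Real.exp_pos (β*T)).le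
          linarith only [h9]
        linarith
      · refine le_trans (min_le_right _ _) (le_trans (min_le_left _ _) ?_)
        linarith
  have hcob : (𝓝[Sd] ξ).IsCoboundedUnder (· ≤ ·) (Fb T β a b f g) :=
    Filter.isCoboundedUnder_le_of_eventually_le _ hlb
  have hfreq : ∃ᶠ η in 𝓝[Sd] ξ, -ε < Fb T β a b f g η := by
    refine Filter.frequently_lt_of_lt_limsup hcob ?_
    rw [upEnv] at hge
    rw [hξ] at hge ⊢
    linarith
  obtain ⟨η, hηF, hηd, hηS⟩ := (hfreq.and_eventually (h1ev.and h2ev)).exists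
  obtain ⟨⟨t, x⟩, r, ⟨q, p'⟩, A, l⟩ := η
  obtain ⟨hdt, hdx, hdr, hdq, hdp, hdA, hdl⟩ := tuple_dist_lt hηd
  simp only [hξ] at hdt hdx hdr hdq hdp hdA hdl
  have htI : t ∈ Set.Icc (0:ℝ) T := mem_Omb.1 hηS
  have hcase : ¬ (t < T) := by
    intro hlt
    rw [show Fb T β a b f g ((t, x), r, (q, p'), A, l) =
        min (-q + β * r -
          ⨆ w, (((1 : ℝ) / 2) * b x w ^ 2 * A + a x w * p' + Real.exp (β * t) * f t x w))
          (r - l) from by rw [Fb]; rw [if_pos hlt]] at hηF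
    have hS := (abs_le.1 (hSbound t x p' A htI hdx hdp hdA)).1
    have hq1 := abs_lt.1 (lt_of_lt_of_le hdq hδ'1)
    have hr1 := abs_lt.1 (lt_of_lt_of_le hdr hδ'1)
    have hβr : β * r ≤ β*(C+1) := by
      have hr2 : r ≤ C+1 := by linarith only [hr1, hVpn]
      have h9 := mul_le_mul_of_nonneg_left hr2 hβ.le
      linarith only [h9]
    have hb1 : -q + β * r -
        (⨆ w, (((1:ℝ)/2) * b x w ^ 2 * A + a x w * p' + Real.exp (β * t) * f t x w)) ≤ -1 := by
      linarith
    have := min_le_left (-q + β * r -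
      ⨆ w, (((1:ℝ)/2) * b x w ^ 2 * A + a x w * p' + Real.exp (β * t) * f t x w)) (r - l)
    linarith
  rw [show Fb T β a b f g ((t, x), r, (q, p'), A, l) =
      min (r - Real.exp (β * T) * g x) (r - l) from by rw [Fb]; rw [if_neg hcase]] at hηF
  have hrg : -ε < r - Real.exp (β * T) * g x := lt_of_lt_of_le hηF (min_le_left _ _)
  have hrl : -ε < r - l := lt_of_lt_of_le hηF (min_le_right _ _)
  have hrV := abs_lt.1 (lt_of_lt_of_le hdr hδ'ε)
  have hlℓ := abs_lt.1 (lt_of_lt_of_le hdl hδ'ε)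
  have hgx : |Real.exp (β*T) * g x - Real.exp (β*T) * g xn| < ε := by
    have := hgd3 x (by rw [Real.dist_eq]; exact lt_of_lt_of_le hdx hδ'3)
    rwa [Real.dist_eq] at this
  have hgx1 := abs_lt.1 hgx
  -- V (tn,xn) > gβ xn - 3ε and V (tn,xn) > ℓn - 3ε
  have hVg : Real.exp (β*T) * g xn - 3*ε < V (tn, xn) := by linarith
  have hVℓ : ℓn - 3*ε < V (tn, xn) := by linarith
  -- pass to (T, x₀)
  have hℓb : MopB β Z Γ K V (T, x₀) - ε ≤ ℓn :=
    hMl (tn, xn) hpnOmb (lt_of_lt_of_le hdistpn hmδ₁)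
  have hgb' : Real.exp (β*T) * g x₀ - ε ≤ Real.exp (β*T) * g xn := by
    have := hgd xn (by rw [Real.dist_eq]; exact lt_of_lt_of_le hxm hmδ₂)
    rw [Real.dist_eq] at this
    simp only [Pi.mul_apply] at this
    linarith [abs_lt.1 this]
  refine le_min (by linarith) (by linarith)

/-- No boundary layer at the terminal time for the discounted HJBQVI: every bounded
upper semicontinuous subsolution `V` satisfies
`min { V(T,x) − g_β(x), V(T,x) − M_β V(T,x) } ≤ 0` for all `x`, and every bounded lower
semicontinuous supersolution satisfies the symmetric inequality `≥ 0`. -/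
theorem hjbqvi_no_boundary_layer
    (T : ℝ) (hT : 0 < T) (β : ℝ) (hβ : 0 < β)
    {W : Type*} [MetricSpace W] [CompactSpace W] [Nonempty W]
    {Y : Type*} [MetricSpace Y]
    (Z : ℝ × ℝ → NonemptyCompacts Y) (hZ : ContinuousOn Z (Omb T))
    (f : ℝ → ℝ → W → ℝ)
    (hfc : ContinuousOn (fun p : ℝ × ℝ × W => f p.1 p.2.1 p.2.2)
      {p : ℝ × ℝ × W | p.1 ∈ Set.Icc 0 T})
    (hfb : ∃ C, ∀ t ∈ Set.Icc (0 : ℝ) T, ∀ (x : ℝ) (w : W), |f t x w| ≤ C)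
    (g : ℝ → ℝ) (hgc : Continuous g) (hgb : ∃ C, ∀ x, |g x| ≤ C)
    (Γ : ℝ → ℝ → Y → ℝ)
    (hΓ : ContinuousOn (fun p : ℝ × ℝ × Y => Γ p.1 p.2.1 p.2.2)
      {p : ℝ × ℝ × Y | p.1 ∈ Set.Icc 0 T})
    (K : ℝ → ℝ → Y → ℝ)
    (hK : ContinuousOn (fun p : ℝ × ℝ × Y => K p.1 p.2.1 p.2.2)
      {p : ℝ × ℝ × Y | p.1 ∈ Set.Icc 0 T})
    (hKneg : ∃ δ > (0 : ℝ), ∀ t ∈ Set.Icc (0 : ℝ) T, ∀ (x : ℝ) (z : Y), K t x z ≤ -δ)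
    (a b : ℝ → W → ℝ)
    (hac : Continuous fun p : ℝ × W => a p.1 p.2)
    (hbc : Continuous fun p : ℝ × W => b p.1 p.2)
    (L : ℝ) (hLip : ∀ x x' w, |a x w - a x' w| + |b x w - b x' w| ≤ L * |x - x'|)
    (hMg : ∀ x : ℝ, Mop Z Γ K (fun q => g q.2) (T, x) ≤ g x) :
    (∀ V : ℝ × ℝ → ℝ, (∃ C, ∀ p ∈ Omb T, |V p| ≤ C) →
      UpperSemicontinuousOn V (Omb T) → IsSubsolB T β a b f g Z Γ K V →
      ∀ x : ℝ,
        min (V (T, x) - Real.exp (β * T) * g x) (V (T, x) - MopB β Z Γ K V (T, x)) ≤ 0) ∧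
    (∀ V : ℝ × ℝ → ℝ, (∃ C, ∀ p ∈ Omb T, |V p| ≤ C) →
      LowerSemicontinuousOn V (Omb T) → IsSupersolB T β a b f g Z Γ K V →
      ∀ x : ℝ,
        0 ≤ min (V (T, x) - Real.exp (β * T) * g x) (V (T, x) - MopB β Z Γ K V (T, x))) := by
  constructor
  · intro V hVb hVu hsubV x
    exact hjb_sub_half T hT β hβ Z hZ f hfb g hgc Γ hΓ K hK hKneg a b hac hbc V hVb hVu hsubV x
  · intro V hVb hVl hsupV x
    exact hjb_sup_half T hT β hβ Z hZ f hfb g hgc hgb Γ hΓ K hK hKneg a b hac hbc V hVb hVl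
      hsupV x
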